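/- (Binary Helstrom bound, mixed states, equal priors.) Let ρ₀ and ρ₁ be n×n positive semidefinite complex matrices each of trace 1, and let η₁, …, ηₙ be the (real) eigenvalues of the Hermitian matrix Δ = ρ₁ − ρ₀. Then for every n×n complex matrix Π₀ with Π₀ and I − Π₀ positive semidefinite, the average error probability ½·Re Tr((I − Π₀) ρ₀) + ½·Re Tr(Π₀ ρ₁) is at least ½(1 − Σ_{ηᵢ > 0} ηᵢ), and this minimum is attained by taking Π₀ to be the orthogonal projection onto the span of the eigenvectors of Δ with non-positive eigenvalues. -/

import Mathlib

open scoped ComplexOrder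
open Matrix

private lemma psd_diag_nonneg {n : ℕ} {M : Matrix (Fin n) (Fin n) ℂ}
    (hM : M.PosSemidef) (i : Fin n) : 0 ≤ M i i := by
  exact hM.diag_nonneg


/-- Binary Helstrom bound for mixed states with equal priors: the average error probability of
any binary POVM `{Π₀, I − Π₀}` is at least `½(1 − Σ_{ηᵢ>0} ηᵢ)`, where `ηᵢ` are the eigenvalues
of `Δ = ρ₁ − ρ₀`; the bound is attained by the projection onto the non-positive eigenspaces. -/
theorem helstrom_bound_mixed {n : ℕ} (ρ₀ ρ₁ : Matrix (Fin n) (Fin n) ℂ)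
    (hρ₀ : ρ₀.PosSemidef) (hρ₁ : ρ₁.PosSemidef)
    (htr₀ : ρ₀.trace = 1) (htr₁ : ρ₁.trace = 1)
    (hΔ : (ρ₁ - ρ₀).IsHermitian) :
    (∀ P₀ : Matrix (Fin n) (Fin n) ℂ, P₀.PosSemidef → (1 - P₀).PosSemidef →
      (1 / 2) * (1 - ∑ i, if 0 < hΔ.eigenvalues i then hΔ.eigenvalues i else 0) ≤
        (1 / 2) * ((1 - P₀) * ρ₀).trace.re + (1 / 2) * (P₀ * ρ₁).trace.re) ∧
    (∀ Pproj : Matrix (Fin n) (Fin n) ℂ,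
      Pproj = (hΔ.eigenvectorUnitary : Matrix (Fin n) (Fin n) ℂ) *
          Matrix.diagonal (fun i => if hΔ.eigenvalues i ≤ 0 then (1 : ℂ) else 0) *
          (hΔ.eigenvectorUnitary : Matrix (Fin n) (Fin n) ℂ).conjTranspose →
      Pproj.PosSemidef ∧ (1 - Pproj).PosSemidef ∧
        (1 / 2) * ((1 - Pproj) * ρ₀).trace.re + (1 / 2) * (Pproj * ρ₁).trace.re =
          (1 / 2) * (1 - ∑ i, if 0 < hΔ.eigenvalues i then hΔ.eigenvalues i else 0)) := by
  classical
  set U : Matrix (Fin n) (Fin n) ℂ := (hΔ.eigenvectorUnitary : Matrix (Fin n) (Fin n) ℂ) with hUdef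
  set η : Fin n → ℝ := hΔ.eigenvalues with hηdef
  have hU1 : Uᴴ * U = 1 := by
    have := Matrix.mem_unitaryGroup_iff'.mp hΔ.eigenvectorUnitary.2
    simpa [Matrix.star_eq_conjTranspose] using this
  have hU2 : U * Uᴴ = 1 := by
    have := Matrix.mem_unitaryGroup_iff.mp hΔ.eigenvectorUnitary.2
    simpa [Matrix.star_eq_conjTranspose] using this
  -- trace formula
  have tf : ∀ P : Matrix (Fin n) (Fin n) ℂ,
      (P * (ρ₁ - ρ₀)).trace = ∑ i, (Uᴴ * P * U) i i * (η i : ℂ) := by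
    intro P
    have h := hΔ.spectral_theorem
    calc (P * (ρ₁ - ρ₀)).trace
        = (P * (U * diagonal (RCLike.ofReal ∘ η) * star U)).trace := by rw [h, Unitary.conjStarAlgAut_apply]
      _ = ((star U * P * U) * diagonal (RCLike.ofReal ∘ η)).trace := by
          rw [← Matrix.mul_assoc, ← Matrix.mul_assoc, trace_mul_cycle]
          rw [Matrix.mul_assoc (star U) P]
      _ = _ := by
          simp [Matrix.trace, Matrix.mul_apply, Matrix.diagonal, Finset.sum_ite_eq,
            Matrix.star_eq_conjTranspose, Matrix.diag]
  -- sum of eigenvalues is zero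
  have hsum : ∑ i, η i = 0 := by
    have h0 : (ρ₁ - ρ₀).trace = 0 := by rw [trace_sub, htr₀, htr₁, sub_self]
    have h1 : (ρ₁ - ρ₀).trace = ∑ i, (η i : ℂ) := by
      have h2 := tf 1
      rw [Matrix.one_mul, Matrix.mul_one, hU1] at h2
      simpa [Matrix.one_apply] using h2
    have : ((∑ i, η i : ℝ) : ℂ) = 0 := by push_cast; rw [← h1, h0]
    exact_mod_cast this
  set S : ℝ := ∑ i, if 0 < η i then η i else 0 with hSdef
  have hMsum : ∑ i, (if 0 < η i then (0:ℝ) else η i) = -S := by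
    have h2 : ∑ i, ((if 0 < η i then (0:ℝ) else η i) + (if 0 < η i then η i else 0)) =
        ∑ i, η i := Finset.sum_congr rfl fun j _ => by split <;> simp
    rw [Finset.sum_add_distrib, hsum] at h2
    linarith
  -- error probability identity
  have herr : ∀ P : Matrix (Fin n) (Fin n) ℂ,
      (1 / 2) * ((1 - P) * ρ₀).trace.re + (1 / 2) * (P * ρ₁).trace.re =
        1 / 2 + (1 / 2) * (P * (ρ₁ - ρ₀)).trace.re := by
    intro P
    have h1 : ((1 - P) * ρ₀).trace = 1 - (P * ρ₀).trace := by
      rw [Matrix.sub_mul, Matrix.one_mul, trace_sub, htr₀]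
    have h2 : (P * (ρ₁ - ρ₀)).trace = (P * ρ₁).trace - (P * ρ₀).trace := by
      rw [Matrix.mul_sub, trace_sub]
    rw [h1, h2]
    simp [Complex.sub_re]
    ring
  constructor
  · -- lower bound
    intro P hP hP1
    set Q : Matrix (Fin n) (Fin n) ℂ := Uᴴ * P * U with hQdef
    have hQ : Q.PosSemidef := hP.conjTranspose_mul_mul_same U
    have hQ1 : (1 - Q).PosSemidef := by
      have : Uᴴ * (1 - P) * U = 1 - Q := by
        rw [Matrix.mul_sub, Matrix.mul_one, Matrix.sub_mul, hU1, hQdef]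
      rw [← this]
      exact hP1.conjTranspose_mul_mul_same U
    -- diagonal bounds
    have hdiag : ∀ i, 0 ≤ (Q i i).re ∧ (Q i i).re ≤ 1 := by
      intro i
      have h1 := psd_diag_nonneg hQ i
      have h2 := psd_diag_nonneg hQ1 i
      rw [Complex.le_def] at h1 h2
      constructor
      · simpa using h1.1
      · have := h2.1
        simp [Matrix.sub_apply, Matrix.one_apply, Complex.sub_re] at this
        linarith
    have htre : (P * (ρ₁ - ρ₀)).trace.re = ∑ i, (Q i i).re * η i := by
      rw [tf P, Complex.re_sum]
      congr 1; funext i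
      simp [Complex.mul_re, hQdef]
    have hge : -S ≤ (P * (ρ₁ - ρ₀)).trace.re := by
      rw [htre, ← hMsum]
      apply Finset.sum_le_sum
      intro i _
      obtain ⟨h0, h1⟩ := hdiag i
      by_cases hpos : 0 < η i
      · simp only [if_pos hpos]
        positivity
      · simp only [if_neg hpos]
        push_neg at hpos
        nlinarith
    rw [herr P]
    linarith
  · -- optimality
    intro Pproj hPdef
    set E : Matrix (Fin n) (Fin n) ℂ :=
      Matrix.diagonal (fun i => if η i ≤ 0 then (1 : ℂ) else 0) with hEdef
    have hPP : Pproj = U * E * Uᴴ := hPdef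
    have hE : E.PosSemidef := by
      rw [hEdef, Matrix.posSemidef_diagonal_iff]
      intro i; split
      · exact zero_le_one
      · exact le_refl 0
    have hE1 : (1 - E).PosSemidef := by
      have h1 : (1 : Matrix (Fin n) (Fin n) ℂ) - E =
          Matrix.diagonal (fun i => if η i ≤ 0 then (0 : ℂ) else 1) := by
        ext i j
        by_cases hij : i = j
        · subst hij
          simp only [Matrix.sub_apply, Matrix.one_apply_eq, hEdef, Matrix.diagonal_apply_eq]
          split <;> simp
        · simp [Matrix.sub_apply, Matrix.one_apply_ne hij, hEdef, Matrix.diagonal_apply_ne _ hij]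
      rw [h1, Matrix.posSemidef_diagonal_iff]
      intro i; split
      · exact le_refl 0
      · exact zero_le_one
    refine ⟨?_, ?_, ?_⟩
    · rw [hPP]; exact hE.mul_mul_conjTranspose_same U
    · have h1 : (1 : Matrix (Fin n) (Fin n) ℂ) - Pproj = U * (1 - E) * Uᴴ := by
        rw [hPP, Matrix.mul_sub, Matrix.mul_one, Matrix.sub_mul, hU2]
      rw [h1]
      exact hE1.mul_mul_conjTranspose_same U
    · have hQE : Uᴴ * Pproj * U = E := by
        rw [hPP]
        calc Uᴴ * (U * E * Uᴴ) * U = (Uᴴ * U) * E * (Uᴴ * U) := by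
              simp only [Matrix.mul_assoc]
        _ = E := by rw [hU1, Matrix.one_mul, Matrix.mul_one]
      have htr : (Pproj * (ρ₁ - ρ₀)).trace.re = -S := by
        rw [tf Pproj, hQE, Complex.re_sum, ← hMsum]
        congr 1; funext i
        rw [hEdef]
        by_cases hle : η i ≤ 0
        · rw [if_neg (not_lt.mpr hle)]
          simp [Matrix.diagonal_apply_eq, if_pos hle]
        · rw [if_pos (lt_of_not_ge hle)]
          simp [Matrix.diagonal_apply_eq, if_neg hle]
      rw [herr Pproj, htr]
      ring
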